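/- Fermionic Wick formula: Let W = W_cre ⊕ W_ann be a polarization, Λ(W_cre) the Fock representation of Cl(W), v_vac = 1 the vacuum and v*_vac the dual vacuum (the linear functional vanishing on Λ^m(W_cre) for m ≥ 1 and equal to 1 on the vacuum). Then for any φ₁, …, φ_n ∈ W, ⟨v*_vac, φ₁⋯φ_n·v_vac⟩ = Pf([⟨v*_vac, φ_i φ_j·v_vac⟩]_{i,j=1}^n), where the n×n matrix with entries A_{ij} = ⟨v*_vac, φ_i φ_j v_vac⟩ for i < j, A_{ji} = −A_{ij}, A_{ii} = 0 is antisymmetric and Pf denotes its Pfaffian (zero when n is odd). -/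

import Mathlib

noncomputable section

open scoped BigOperators

/-- The Pfaffian of an `n × n` complex matrix: zero if `n` is odd, and for `n = 2m` given
by `(1/(2^m m!)) Σ_{π ∈ S_{2m}} sgn(π) ∏_{s=1}^m A_{π(2s−1),π(2s)}`. -/
def pf {n : ℕ} (A : Matrix (Fin n) (Fin n) ℂ) : ℂ :=
  if h : Even n then
    ((2 ^ (n / 2) * (Nat.factorial (n / 2)) : ℂ))⁻¹ *
      ∑ π : Equiv.Perm (Fin n), (Equiv.Perm.sign π : ℤ) *
        ∏ s : Fin (n / 2),
          A (π ⟨2 * (s : ℕ), by have := Nat.even_iff.mp h; omega⟩)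
            (π ⟨2 * (s : ℕ) + 1, by have := Nat.even_iff.mp h; omega⟩)
  else 0


def pfin (n : ℕ) (s : Fin (n/2)) : Fin n := ⟨2*s, by have := s.isLt; omega⟩
def pfin' (n : ℕ) (s : Fin (n/2)) : Fin n := ⟨2*s+1, by have := s.isLt; omega⟩
def pfTerm {n : ℕ} (A : Matrix (Fin n) (Fin n) ℂ) (π : Equiv.Perm (Fin n)) : ℂ :=
  ((Equiv.Perm.sign π : ℤ) : ℂ) * ∏ s : Fin (n/2), A (π (pfin n s)) (π (pfin' n s))

@[simp] lemma pfin_val {n : ℕ} (s : Fin (n/2)) : (pfin n s : ℕ) = 2*s := rfl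
@[simp] lemma pfin'_val {n : ℕ} (s : Fin (n/2)) : (pfin' n s : ℕ) = 2*s+1 := rfl

section
variable {N : ℕ}

def s0 {N : ℕ} : Fin ((N+2)/2) := ⟨0, by omega⟩

@[simp] lemma s0_val : ((s0 (N := N)) : ℕ) = 0 := rfl

lemma pfTerm_flip (A : Matrix (Fin (N+2)) (Fin (N+2)) ℂ) (hA : ∀ i j, A j i = - A i j)
    (π : Equiv.Perm (Fin (N+2))) :
    pfTerm A (π * Equiv.swap (pfin (N+2) s0) (pfin' (N+2) s0)) = pfTerm A π := by
  have hne : (pfin (N+2) s0) ≠ pfin' (N+2) s0 := by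
    apply Fin.ne_of_val_ne; simp
  unfold pfTerm
  rw [← Finset.mul_prod_erase Finset.univ _ (Finset.mem_univ (s0 (N := N))),
      ← Finset.mul_prod_erase Finset.univ
        (fun s => A (π (pfin (N+2) s)) (π (pfin' (N+2) s))) (Finset.mem_univ (s0 (N := N)))]
  have herase : ∀ s ∈ Finset.univ.erase (s0 (N := N)),
      A ((π * Equiv.swap (pfin (N+2) s0) (pfin' (N+2) s0)) (pfin (N+2) s))
        ((π * Equiv.swap (pfin (N+2) s0) (pfin' (N+2) s0)) (pfin' (N+2) s))
      = A (π (pfin (N+2) s)) (π (pfin' (N+2) s)) := by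
    intro s hs
    have hv : (s : ℕ) ≠ 0 := fun h => (Finset.ne_of_mem_erase hs) (Fin.ext h)
    rw [Equiv.Perm.mul_apply, Equiv.Perm.mul_apply,
        Equiv.swap_apply_of_ne_of_ne (a := pfin (N+2) s0), Equiv.swap_apply_of_ne_of_ne] <;>
      (apply Fin.ne_of_val_ne; simp only [pfin_val, pfin'_val, s0_val]; omega)
  rw [Finset.prod_congr rfl herase]
  have hfac : A ((π * Equiv.swap (pfin (N+2) s0) (pfin' (N+2) s0)) (pfin (N+2) s0))
      ((π * Equiv.swap (pfin (N+2) s0) (pfin' (N+2) s0)) (pfin' (N+2) s0))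
      = - A (π (pfin (N+2) s0)) (π (pfin' (N+2) s0)) := by
    rw [Equiv.Perm.mul_apply, Equiv.Perm.mul_apply, Equiv.swap_apply_left,
      Equiv.swap_apply_right, hA]
  rw [hfac]
  have hsgn : ((Equiv.Perm.sign (π * Equiv.swap (pfin (N+2) (s0 (N:=N))) (pfin' (N+2) s0)) : ℤ) : ℂ)
      = - ((Equiv.Perm.sign π : ℤ) : ℂ) := by
    rw [map_mul, Equiv.Perm.sign_swap hne]
    push_cast
    ring
  rw [hsgn]
  ring

lemma pfTerm_pairswap (A : Matrix (Fin (N+2)) (Fin (N+2)) ℂ) (π : Equiv.Perm (Fin (N+2)))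
    (t : Fin ((N+2)/2)) :
    pfTerm A (π * (Equiv.swap (pfin (N+2) s0) (pfin (N+2) t)
        * Equiv.swap (pfin' (N+2) s0) (pfin' (N+2) t)))
      = pfTerm A π := by
  rcases eq_or_ne t s0 with rfl | ht
  · simp [Equiv.Perm.mul_refl]
  have htv : (t : ℕ) ≠ 0 := fun h => ht (Fin.ext h)
  have h1 : (pfin (N+2) s0) ≠ pfin (N+2) t := by
    apply Fin.ne_of_val_ne; simp only [pfin_val, s0_val]; omega
  have h2 : (pfin' (N+2) s0) ≠ pfin' (N+2) t := by
    apply Fin.ne_of_val_ne; simp only [pfin'_val, s0_val]; omega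
  have key : ∀ s : Fin ((N+2)/2),
      Equiv.swap (pfin (N+2) s0) (pfin (N+2) t)
          (Equiv.swap (pfin' (N+2) s0) (pfin' (N+2) t) (pfin (N+2) s))
        = pfin (N+2) (Equiv.swap s0 t s)
      ∧ Equiv.swap (pfin (N+2) s0) (pfin (N+2) t)
          (Equiv.swap (pfin' (N+2) s0) (pfin' (N+2) t) (pfin' (N+2) s))
        = pfin' (N+2) (Equiv.swap s0 t s) := by
    intro s
    have hvodd : ∀ u : Fin ((N+2)/2),
        Equiv.swap (pfin (N+2) (s0 (N:=N))) (pfin (N+2) t) (pfin' (N+2) u) = pfin' (N+2) u := by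
      intro u
      apply Equiv.swap_apply_of_ne_of_ne <;>
        (apply Fin.ne_of_val_ne; simp only [pfin_val, pfin'_val, s0_val]; omega)
    have hveven : ∀ u : Fin ((N+2)/2), (u : ℕ) ≠ 0 → (u : ℕ) ≠ (t : ℕ) →
        Equiv.swap (pfin' (N+2) (s0 (N:=N))) (pfin' (N+2) t) (pfin (N+2) u) = pfin (N+2) u := by
      intro u _ _
      apply Equiv.swap_apply_of_ne_of_ne <;>
        (apply Fin.ne_of_val_ne; simp only [pfin_val, pfin'_val, s0_val]; omega)
    have hveven' : ∀ u : Fin ((N+2)/2),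
        Equiv.swap (pfin' (N+2) (s0 (N:=N))) (pfin' (N+2) t) (pfin (N+2) u) = pfin (N+2) u := by
      intro u
      apply Equiv.swap_apply_of_ne_of_ne <;>
        (apply Fin.ne_of_val_ne; simp only [pfin_val, pfin'_val, s0_val]; omega)
    rcases eq_or_ne s s0 with rfl | hs0
    · rw [Equiv.swap_apply_left]
      exact ⟨by rw [hveven', Equiv.swap_apply_left],
             by rw [Equiv.swap_apply_left, hvodd]⟩
    rcases eq_or_ne s t with rfl | hst
    · rw [Equiv.swap_apply_right]
      exact ⟨by rw [hveven', Equiv.swap_apply_right],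
             by rw [Equiv.swap_apply_right, hvodd]⟩
    · rw [Equiv.swap_apply_of_ne_of_ne hs0 hst]
      have hsv : (s : ℕ) ≠ 0 := fun h => hs0 (Fin.ext h)
      have hsv' : (s : ℕ) ≠ (t : ℕ) := fun h => hst (Fin.ext h)
      constructor
      · rw [hveven']
        apply Equiv.swap_apply_of_ne_of_ne <;>
          (apply Fin.ne_of_val_ne; simp only [pfin_val, s0_val]; omega)
      · rw [show Equiv.swap (pfin' (N+2) (s0 (N:=N))) (pfin' (N+2) t) (pfin' (N+2) s)
              = pfin' (N+2) s from ?_, hvodd]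
        apply Equiv.swap_apply_of_ne_of_ne <;>
          (apply Fin.ne_of_val_ne; simp only [pfin'_val, s0_val]; omega)
  unfold pfTerm
  have hprod : ∏ s : Fin ((N+2)/2),
      A ((π * (Equiv.swap (pfin (N+2) s0) (pfin (N+2) t)
            * Equiv.swap (pfin' (N+2) s0) (pfin' (N+2) t))) (pfin (N+2) s))
        ((π * (Equiv.swap (pfin (N+2) s0) (pfin (N+2) t)
            * Equiv.swap (pfin' (N+2) s0) (pfin' (N+2) t))) (pfin' (N+2) s))
      = ∏ s : Fin ((N+2)/2), A (π (pfin (N+2) s)) (π (pfin' (N+2) s)) := by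
    rw [← Equiv.prod_comp (Equiv.swap (s0 (N:=N)) t)
      (fun s => A (π (pfin (N+2) s)) (π (pfin' (N+2) s)))]
    refine Finset.prod_congr rfl fun s _ => ?_
    simp only [Equiv.Perm.mul_apply]
    rw [(key s).1, (key s).2]
  rw [hprod]
  congr 1
  rw [map_mul, map_mul, Equiv.Perm.sign_swap h1, Equiv.Perm.sign_swap h2]
  push_cast
  ring
end

section
variable {N : ℕ}

def half (hN : N % 2 = 0) (k : Fin (N+2)) : Fin ((N+2)/2) := ⟨(k : ℕ)/2, by have := k.isLt; omega⟩

@[simp] lemma half_val (hN : N % 2 = 0) (k : Fin (N+2)) : (half hN k : ℕ) = (k : ℕ)/2 := rfl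

def sig (hN : N % 2 = 0) (k : Fin (N+2)) : Equiv.Perm (Fin (N+2)) :=
  (if (k : ℕ) % 2 = 1 then Equiv.swap (pfin (N+2) s0) (pfin' (N+2) s0) else 1)
  * (Equiv.swap (pfin (N+2) s0) (pfin (N+2) (half hN k))
      * Equiv.swap (pfin' (N+2) s0) (pfin' (N+2) (half hN k)))

lemma half_pfin (hN : N % 2 = 0) (t : Fin ((N+2)/2)) : half hN (pfin (N+2) t) = t := by
  apply Fin.ext; simp only [half_val, pfin_val]; omega

lemma half_pfin' (hN : N % 2 = 0) (t : Fin ((N+2)/2)) : half hN (pfin' (N+2) t) = t := by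
  apply Fin.ext; simp only [half_val, pfin'_val]; omega

lemma sig_apply_self (hN : N % 2 = 0) (k : Fin (N+2)) : sig hN k k = 0 := by
  have h0 : pfin (N+2) (s0 (N := N)) = 0 := by
    apply Fin.ext; simp
  unfold sig
  rcases Nat.even_or_odd (k : ℕ) with he | ho
  · have he' : (k : ℕ) % 2 = 0 := Nat.even_iff.mp he
    obtain ⟨t, hk⟩ : ∃ t, k = pfin (N+2) t :=
      ⟨⟨(k:ℕ)/2, by have := k.isLt; omega⟩, by apply Fin.ext; simp only [pfin_val]; omega⟩
    subst hk
    rw [if_neg (by simp only [pfin_val]; omega : ¬ (pfin (N+2) t : ℕ) % 2 = 1), half_pfin]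
    simp only [Equiv.Perm.mul_apply, one_mul, Equiv.Perm.one_apply]
    have e1 : Equiv.swap (pfin' (N+2) (s0 (N:=N))) (pfin' (N+2) t) (pfin (N+2) t)
        = pfin (N+2) t := by
      apply Equiv.swap_apply_of_ne_of_ne <;>
        (apply Fin.ne_of_val_ne; simp only [pfin_val, pfin'_val, s0_val]; omega)
    rw [e1, Equiv.swap_apply_right, h0]
  · have ho' : (k : ℕ) % 2 = 1 := Nat.odd_iff.mp ho
    obtain ⟨t, hk⟩ : ∃ t, k = pfin' (N+2) t :=
      ⟨⟨(k:ℕ)/2, by have := k.isLt; omega⟩, by apply Fin.ext; simp only [pfin'_val]; omega⟩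
    subst hk
    rw [if_pos (by simp only [pfin'_val]; omega : (pfin' (N+2) t : ℕ) % 2 = 1), half_pfin']
    simp only [Equiv.Perm.mul_apply]
    rw [Equiv.swap_apply_right]
    have e1 : Equiv.swap (pfin (N+2) (s0 (N:=N))) (pfin (N+2) t) (pfin' (N+2) (s0 (N:=N)))
        = pfin' (N+2) s0 := by
      apply Equiv.swap_apply_of_ne_of_ne <;>
        (apply Fin.ne_of_val_ne; simp only [pfin_val, pfin'_val, s0_val]; omega)
    rw [e1, Equiv.swap_apply_right, h0]
end

section
variable {N : ℕ}

lemma pfTerm_sig (A : Matrix (Fin (N+2)) (Fin (N+2)) ℂ) (hA : ∀ i j, A j i = - A i j)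
    (hN : N % 2 = 0) (π : Equiv.Perm (Fin (N+2))) (k : Fin (N+2)) :
    pfTerm A (π * sig hN k) = pfTerm A π := by
  unfold sig
  by_cases hp : (k : ℕ) % 2 = 1
  · rw [if_pos hp, ← mul_assoc, ← mul_assoc]
    rw [show π * Equiv.swap (pfin (N+2) s0) (pfin' (N+2) s0)
          * Equiv.swap (pfin (N+2) s0) (pfin (N+2) (half hN k))
          * Equiv.swap (pfin' (N+2) s0) (pfin' (N+2) (half hN k))
        = (π * Equiv.swap (pfin (N+2) s0) (pfin' (N+2) s0))
          * (Equiv.swap (pfin (N+2) s0) (pfin (N+2) (half hN k))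
            * Equiv.swap (pfin' (N+2) s0) (pfin' (N+2) (half hN k))) by group]
    rw [pfTerm_pairswap, pfTerm_flip A hA]
  · rw [if_neg hp, one_mul]
    exact pfTerm_pairswap A π (half hN k)

lemma sig_inv_zero (hN : N % 2 = 0) (k : Fin (N+2)) : (sig hN k)⁻¹ 0 = k := by
  rw [← sig_apply_self hN k, Equiv.Perm.inv_def, Equiv.symm_apply_apply]

def stepEquiv (hN : N % 2 = 0) :
    Fin (N+2) × {π : Equiv.Perm (Fin (N+2)) // π 0 = 0} ≃ Equiv.Perm (Fin (N+2)) where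
  toFun x := x.2.1 * sig hN x.1
  invFun π := ⟨π⁻¹ 0, ⟨π * (sig hN (π⁻¹ 0))⁻¹, by
    rw [Equiv.Perm.mul_apply, sig_inv_zero hN (π⁻¹ 0), Equiv.Perm.inv_def, Equiv.apply_symm_apply]⟩⟩
  left_inv := by
    rintro ⟨k, π₀, hπ₀⟩
    have h1 : (π₀ * sig hN k)⁻¹ 0 = k := by
      rw [mul_inv_rev, Equiv.Perm.mul_apply]
      have h0 : π₀⁻¹ 0 = 0 := by
        have := congrArg (fun z => π₀⁻¹ z) hπ₀
        simpa using this.symm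
      rw [h0, sig_inv_zero]
    refine Prod.ext_iff.mpr ⟨h1, Subtype.ext ?_⟩
    show π₀ * sig hN k * (sig hN ((π₀ * sig hN k)⁻¹ 0))⁻¹ = π₀
    rw [h1]
    group
  right_inv := by
    intro π
    show π * (sig hN (π⁻¹ 0))⁻¹ * sig hN (π⁻¹ 0) = π
    group

lemma sum_reduce (hN : N % 2 = 0) (A : Matrix (Fin (N+2)) (Fin (N+2)) ℂ)
    (hA : ∀ i j, A j i = - A i j) :
    ∑ π : Equiv.Perm (Fin (N+2)), pfTerm A π
      = ((N : ℂ)+2) * ∑ π₀ : {π : Equiv.Perm (Fin (N+2)) // π 0 = 0}, pfTerm A π₀.1 := by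
  rw [← Fintype.sum_equiv (stepEquiv hN)
    (fun x => pfTerm A ((stepEquiv hN) x)) (pfTerm A) (fun x => rfl)]
  have h1 : ∀ x : Fin (N+2) × {π : Equiv.Perm (Fin (N+2)) // π 0 = 0},
      pfTerm A ((stepEquiv hN) x) = pfTerm A x.2.1 := by
    rintro ⟨k, π₀, hπ₀⟩
    exact pfTerm_sig A hA hN π₀ k
  rw [Fintype.sum_congr _ _ h1, Fintype.sum_prod_type]
  have h2 : ∀ x : Fin (N+2),
      (∑ y : {π : Equiv.Perm (Fin (N+2)) // π 0 = 0}, pfTerm A (((x, y)).2).1)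
        = ∑ y : {π : Equiv.Perm (Fin (N+2)) // π 0 = 0}, pfTerm A y.1 := fun _ => rfl
  rw [Finset.sum_congr rfl (fun x _ => h2 x), Finset.sum_const]
  simp only [Finset.card_univ, Fintype.card_fin, nsmul_eq_mul]
  push_cast
  ring
end


lemma pf_eq {n : ℕ} (h : Even n) (A : Matrix (Fin n) (Fin n) ℂ) :
    pf A = ((2 ^ (n / 2) * (Nat.factorial (n / 2)) : ℂ))⁻¹
      * ∑ π : Equiv.Perm (Fin n), pfTerm A π := by
  rw [pf, dif_pos h]; rfl

lemma sum_pfTerm_submatrix {k : ℕ} (M : Matrix (Fin k) (Fin k) ℂ) (τ : Equiv.Perm (Fin k)) :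
    ∑ σ : Equiv.Perm (Fin k), pfTerm (M.submatrix τ τ) σ
      = ((Equiv.Perm.sign τ : ℤ) : ℂ) * ∑ σ : Equiv.Perm (Fin k), pfTerm M σ := by
  calc ∑ σ : Equiv.Perm (Fin k), pfTerm (M.submatrix τ τ) σ
      = ∑ σ : Equiv.Perm (Fin k), ((Equiv.Perm.sign τ : ℤ) : ℂ) * pfTerm M (τ * σ) := by
        refine Finset.sum_congr rfl fun σ _ => ?_
        simp only [pfTerm, Matrix.submatrix_apply, Equiv.Perm.mul_apply, map_mul]
        push_cast
        rw [← mul_assoc, ← mul_assoc]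
        congr 2
        rcases Int.units_eq_one_or (Equiv.Perm.sign τ) with h | h <;>
          rcases Int.units_eq_one_or (Equiv.Perm.sign σ) with h' | h' <;> simp [h, h']
    _ = ∑ σ : Equiv.Perm (Fin k), ((Equiv.Perm.sign τ : ℤ) : ℂ) * pfTerm M σ :=
        Fintype.sum_equiv (Equiv.mulLeft τ) _ _ (fun σ => rfl)
    _ = _ := by rw [Finset.mul_sum]

section
variable {N : ℕ}

def dEquiv : Fin (N+1) × Equiv.Perm (Fin N) ≃ {π : Equiv.Perm (Fin (N+2)) // π 0 = 0} where
  toFun x := ⟨Equiv.Perm.decomposeFin.symm (0, Equiv.Perm.decomposeFin.symm x), by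
    rw [Equiv.Perm.decomposeFin_symm_apply_zero]⟩
  invFun π := Equiv.Perm.decomposeFin ((Equiv.Perm.decomposeFin π.1).2)
  left_inv x := by simp
  right_inv := by
    rintro ⟨π, hπ⟩
    rcases h : Equiv.Perm.decomposeFin π with ⟨p, e⟩
    have hπe : π = Equiv.Perm.decomposeFin.symm (p, e) := by
      rw [← h, Equiv.symm_apply_apply]
    have hp : p = 0 := by
      rw [hπe, Equiv.Perm.decomposeFin_symm_apply_zero] at hπ
      exact hπ
    apply Subtype.ext
    simp only [h, hp]
    rw [Equiv.symm_apply_apply, hπe, hp]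

lemma sum_zero_fiber (A : Matrix (Fin (N+2)) (Fin (N+2)) ℂ) :
    ∑ π₀ : {π : Equiv.Perm (Fin (N+2)) // π 0 = 0}, pfTerm A π₀.1
      = ∑ x : Fin (N+1) × Equiv.Perm (Fin N),
          pfTerm A (Equiv.Perm.decomposeFin.symm (0, Equiv.Perm.decomposeFin.symm x)) :=
  (Fintype.sum_equiv dEquiv _ _ (fun x => rfl)).symm

def emb2 (q : Fin (N+1)) : Fin N → Fin (N+2) := fun t => ((Equiv.swap 0 q) t.succ).succ
def embM (q : Fin (N+1)) : Fin N → Fin (N+2) := fun t => (q.succAbove t).succ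

lemma term_compute (A : Matrix (Fin (N+2)) (Fin (N+2)) ℂ) (q : Fin (N+1))
    (σ : Equiv.Perm (Fin N)) :
    pfTerm A (Equiv.Perm.decomposeFin.symm (0, Equiv.Perm.decomposeFin.symm (q, σ)))
      = (if q = 0 then 1 else -1) * A 0 q.succ
          * pfTerm (A.submatrix (emb2 q) (emb2 q)) σ := by
  set π : Equiv.Perm (Fin (N+2)) :=
    Equiv.Perm.decomposeFin.symm (0, Equiv.Perm.decomposeFin.symm (q, σ)) with hπ
  have hsgn : ((Equiv.Perm.sign π : ℤ) : ℂ)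
      = (if q = 0 then 1 else -1) * ((Equiv.Perm.sign σ : ℤ) : ℂ) := by
    rw [hπ, Equiv.Perm.decomposeFin.symm_sign, Equiv.Perm.decomposeFin.symm_sign]
    by_cases hq : q = 0 <;> simp [hq]
  have hhalf : (N+2)/2 = N/2 + 1 := by omega
  have hzero : π (pfin (N+2) (finCongr hhalf.symm 0)) = 0 := by
    have h0 : pfin (N+2) (finCongr hhalf.symm 0) = (0 : Fin (N+2)) := by
      apply Fin.ext; simp
    rw [h0, hπ, Equiv.Perm.decomposeFin_symm_apply_zero]
  have hone : π (pfin' (N+2) (finCongr hhalf.symm 0)) = q.succ := by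
    have h1 : pfin' (N+2) (finCongr hhalf.symm 0) = (1 : Fin (N+2)) := by
      apply Fin.ext; simp
    rw [h1, hπ, Equiv.Perm.decomposeFin_symm_apply_one,
      Equiv.Perm.decomposeFin_symm_apply_zero]
    simp
  have heven : ∀ j : Fin (N/2), π (pfin (N+2) (finCongr hhalf.symm j.succ))
      = emb2 q (σ (pfin N j)) := by
    intro j
    have h2 : pfin (N+2) (finCongr hhalf.symm j.succ) = ((pfin N j).succ).succ := by
      apply Fin.ext; simp [Fin.val_succ]; ring
    rw [h2, hπ, Equiv.Perm.decomposeFin_symm_apply_succ,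
      Equiv.Perm.decomposeFin_symm_apply_succ]
    simp [emb2]
  have hodd : ∀ j : Fin (N/2), π (pfin' (N+2) (finCongr hhalf.symm j.succ))
      = emb2 q (σ (pfin' N j)) := by
    intro j
    have h2 : pfin' (N+2) (finCongr hhalf.symm j.succ) = ((pfin' N j).succ).succ := by
      apply Fin.ext; simp [Fin.val_succ]; ring
    rw [h2, hπ, Equiv.Perm.decomposeFin_symm_apply_succ,
      Equiv.Perm.decomposeFin_symm_apply_succ]
    simp [emb2]
  have hprod : ∏ s : Fin ((N+2)/2), A (π (pfin (N+2) s)) (π (pfin' (N+2) s))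
      = A 0 q.succ * ∏ j : Fin (N/2),
          (A.submatrix (emb2 q) (emb2 q)) (σ (pfin N j)) (σ (pfin' N j)) := by
    calc ∏ s : Fin ((N+2)/2), A (π (pfin (N+2) s)) (π (pfin' (N+2) s))
        = ∏ s : Fin (N/2+1), A (π (pfin (N+2) (finCongr hhalf.symm s)))
            (π (pfin' (N+2) (finCongr hhalf.symm s))) :=
          (Fintype.prod_equiv (finCongr hhalf.symm) _ _ (fun s => rfl)).symm
      _ = _ := by
          rw [Fin.prod_univ_succ, hzero, hone]
          congr 1
          refine Finset.prod_congr rfl fun j _ => ?_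
          rw [heven j, hodd j]
          rfl
  rw [pfTerm, hsgn, hprod, pfTerm]
  ring

lemma pfInnerSum (A : Matrix (Fin (N+2)) (Fin (N+2)) ℂ) (q : Fin (N+1)) :
    (if q = 0 then (1:ℂ) else -1)
        * ∑ σ : Equiv.Perm (Fin N), pfTerm (A.submatrix (emb2 q) (emb2 q)) σ
      = (-1)^(q:ℕ)
        * ∑ σ : Equiv.Perm (Fin N), pfTerm (A.submatrix (embM q) (embM q)) σ := by
  induction q using Fin.cases with
  | zero =>
      have he : emb2 (0 : Fin (N+1)) = embM 0 := by
        funext t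
        simp [emb2, embM, Fin.succAbove_zero]
      simp [he]
  | succ i =>
      have he : emb2 i.succ = embM i.succ ∘ i.cycleRange := by
        funext t
        simp only [emb2, embM, Function.comp_apply, ← Fin.succAbove_cycleRange]
      rw [if_neg (Fin.succ_ne_zero i), he]
      have hsub : A.submatrix (embM i.succ ∘ ⇑i.cycleRange) (embM i.succ ∘ ⇑i.cycleRange)
          = (A.submatrix (embM i.succ) (embM i.succ)).submatrix i.cycleRange i.cycleRange := by
        rw [Matrix.submatrix_submatrix]
      rw [hsub, sum_pfTerm_submatrix, Fin.sign_cycleRange]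
      push_cast
      rw [Fin.val_succ, pow_succ]
      ring
end

lemma pf_expand (N : ℕ) (A : Matrix (Fin (N+2)) (Fin (N+2)) ℂ)
    (hA : ∀ i j, A j i = - A i j) :
    pf A = ∑ q : Fin (N+1), (-1)^(q:ℕ) * A 0 q.succ
        * pf (A.submatrix (fun t => (q.succAbove t).succ) (fun t => (q.succAbove t).succ)) := by
  by_cases hN : Even (N+2)
  · have hN' : N % 2 = 0 := by
      rcases hN with ⟨r, hr⟩; omega
    have hEvN : Even N := by
      exact ⟨N/2, by omega⟩
    have hc : ((2 ^ ((N+2)/2) * (Nat.factorial ((N+2)/2)) : ℂ))⁻¹ * ((N:ℂ)+2)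
        = ((2 ^ (N/2) * (Nat.factorial (N/2)) : ℂ))⁻¹ := by
      have h1 : (N+2)/2 = N/2+1 := by omega
      have h2 : (N : ℂ) + 2 = 2 * ((N/2 : ℕ) + 1) := by
        have h3 : N/2*2 = N := by omega
        have h4 : (((N/2)*2 : ℕ) : ℂ) = (N : ℂ) := by rw [h3]
        push_cast at h4
        linear_combination -h4
      rw [h1, Nat.factorial_succ, h2, pow_succ]
      have hx : (2:ℂ)^(N/2) ≠ 0 := pow_ne_zero _ two_ne_zero
      have hy : ((Nat.factorial (N/2) : ℂ)) ≠ 0 := by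
        exact_mod_cast Nat.cast_ne_zero.mpr (Nat.factorial_ne_zero _)
      have hz : ((N/2 : ℕ) : ℂ) + 1 ≠ 0 := by
        have : ((N/2+1 : ℕ) : ℂ) ≠ 0 := Nat.cast_ne_zero.mpr (by omega)
        push_cast at this
        exact this
      field_simp
      push_cast
      ring
    rw [pf_eq hN A, sum_reduce hN' A hA, sum_zero_fiber, Fintype.sum_prod_type]
    have hterm : ∀ q : Fin (N+1),
        ∑ σ : Equiv.Perm (Fin N),
            pfTerm A (Equiv.Perm.decomposeFin.symm (0, Equiv.Perm.decomposeFin.symm (q, σ)))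
          = A 0 q.succ * ((-1)^(q:ℕ)
              * ∑ σ : Equiv.Perm (Fin N), pfTerm (A.submatrix (embM q) (embM q)) σ) := by
      intro q
      rw [← pfInnerSum]
      rw [Finset.mul_sum, Finset.mul_sum]
      refine Finset.sum_congr rfl fun σ _ => ?_
      rw [term_compute]
      ring
    rw [Finset.sum_congr rfl (fun q _ => hterm q)]
    rw [Finset.mul_sum, Finset.mul_sum]
    refine Finset.sum_congr rfl fun q _ => ?_
    rw [pf_eq hEvN (A.submatrix _ _)]
    have : A.submatrix (fun t => (q.succAbove t).succ) (fun t => (q.succAbove t).succ)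
        = A.submatrix (embM q) (embM q) := rfl
    rw [this]
    rw [← hc]
    ring
  · rw [pf, dif_neg hN]
    symm
    apply Finset.sum_eq_zero
    intro q _
    rw [pf, dif_neg (by
      intro h
      exact hN (by rcases h with ⟨r, hr⟩; exact ⟨r+1, by omega⟩)), mul_zero]

section OpSide
variable {W : Type*} [AddCommGroup W] [Module ℂ W]

def fockOp (B : W →ₗ[ℂ] W →ₗ[ℂ] ℂ) (Wcre Wann : Submodule ℂ W)
    (hc : IsCompl Wcre Wann) (w : W) :
    ExteriorAlgebra ℂ Wcre →ₗ[ℂ] ExteriorAlgebra ℂ Wcre :=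
  LinearMap.mulLeft ℂ
      (ExteriorAlgebra.ι ℂ (Submodule.linearProjOfIsCompl Wcre Wann hc w))
    + CliffordAlgebra.contractLeft (Q := (0 : QuadraticForm ℂ ↥Wcre))
        ((B ((Submodule.linearProjOfIsCompl Wann Wcre hc.symm w : Wann) : W)).comp
          Wcre.subtype)

variable (B : W →ₗ[ℂ] W →ₗ[ℂ] ℂ) (Wcre Wann : Submodule ℂ W) (hc : IsCompl Wcre Wann)

def dualOf (w : W) : Module.Dual ℂ ↥Wcre :=
  (B ((Submodule.linearProjOfIsCompl Wann Wcre hc.symm w : Wann) : W)).comp Wcre.subtype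

def gtwo (u v : W) : ℂ := dualOf B Wcre Wann hc u (Submodule.linearProjOfIsCompl Wcre Wann hc v)

lemma fockOp_apply (w : W) (x : ExteriorAlgebra ℂ Wcre) :
    fockOp B Wcre Wann hc w x
      = ExteriorAlgebra.ι ℂ (Submodule.linearProjOfIsCompl Wcre Wann hc w) * x
        + CliffordAlgebra.contractLeft (Q := (0 : QuadraticForm ℂ ↥Wcre))
            (dualOf B Wcre Wann hc w) x := rfl

lemma contr_fockOp (u v : W) (y : ExteriorAlgebra ℂ Wcre) :
    CliffordAlgebra.contractLeft (Q := (0 : QuadraticForm ℂ ↥Wcre)) (dualOf B Wcre Wann hc u)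
        (fockOp B Wcre Wann hc v y)
      = gtwo B Wcre Wann hc u v • y
        - fockOp B Wcre Wann hc v
            (CliffordAlgebra.contractLeft (Q := (0 : QuadraticForm ℂ ↥Wcre))
              (dualOf B Wcre Wann hc u) y) := by
  rw [fockOp_apply, map_add, CliffordAlgebra.contractLeft_ι_mul,
    CliffordAlgebra.contractLeft_comm, fockOp_apply]
  rw [gtwo]
  abel

lemma eps_ι (m : Wcre) :
    ExteriorAlgebra.algebraMapInv (ExteriorAlgebra.ι ℂ m) = (0 : ℂ) := by
  simp [ExteriorAlgebra.algebraMapInv]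

lemma eps_ι_mul (m : Wcre) (x : ExteriorAlgebra ℂ Wcre) :
    ExteriorAlgebra.algebraMapInv (ExteriorAlgebra.ι ℂ m * x) = (0 : ℂ) := by
  rw [map_mul, eps_ι, zero_mul]

lemma twopoint (u v : W) :
    ExteriorAlgebra.algebraMapInv (fockOp B Wcre Wann hc u (fockOp B Wcre Wann hc v 1))
      = gtwo B Wcre Wann hc u v := by
  rw [fockOp_apply _ _ _ _ v, mul_one, CliffordAlgebra.contractLeft_one, add_zero,
    fockOp_apply, CliffordAlgebra.contractLeft_ι, map_add, eps_ι_mul, zero_add]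
  exact ExteriorAlgebra.algebraMap_leftInverse _ _

lemma contr_prod (u : W) (l : List W) (x : ExteriorAlgebra ℂ Wcre) :
    CliffordAlgebra.contractLeft (Q := (0 : QuadraticForm ℂ ↥Wcre)) (dualOf B Wcre Wann hc u)
        ((l.map (fockOp B Wcre Wann hc)).prod x)
      = (∑ j : Fin l.length, ((-1 : ℂ)^(j:ℕ) * gtwo B Wcre Wann hc u (l.get j)) •
            (((l.eraseIdx (j:ℕ)).map (fockOp B Wcre Wann hc)).prod x))
        + ((-1 : ℂ)^l.length) • ((l.map (fockOp B Wcre Wann hc)).prod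
            (CliffordAlgebra.contractLeft (Q := (0 : QuadraticForm ℂ ↥Wcre))
              (dualOf B Wcre Wann hc u) x)) := by
  induction l generalizing x with
  | nil => simp
  | cons v l ih =>
    have hconsG : ∀ (m : List W) (y : ExteriorAlgebra ℂ Wcre),
        (((v :: m).map (fockOp B Wcre Wann hc)).prod) y
          = fockOp B Wcre Wann hc v (((m.map (fockOp B Wcre Wann hc)).prod) y) := by
      intro m y
      rw [List.map_cons, List.prod_cons, Module.End.mul_apply]
    rw [hconsG, contr_fockOp, ih, map_add, map_sum]
    simp only [map_smul, List.length_cons]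
    rw [Fin.sum_univ_succ]
    have hget0 : (v :: l).get (0 : Fin (l.length + 1)) = v := rfl
    have herase0 : (v :: l).eraseIdx ((0 : Fin (l.length + 1)) : ℕ) = l := rfl
    rw [hget0, herase0]
    have key : ∀ j : Fin l.length,
        ((-1 : ℂ)^((j.succ : Fin (l.length+1)) : ℕ)
            * gtwo B Wcre Wann hc u ((v :: l).get j.succ)) •
          ((((v :: l).eraseIdx ((j.succ : Fin (l.length+1)) : ℕ)).map
            (fockOp B Wcre Wann hc)).prod x)
        = - (((-1 : ℂ)^(j:ℕ) * gtwo B Wcre Wann hc u (l.get j)) •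
            fockOp B Wcre Wann hc v (((l.eraseIdx (j:ℕ)).map (fockOp B Wcre Wann hc)).prod x)) := by
      intro j
      have hgets : (v :: l).get j.succ = l.get j := rfl
      have herases : (v :: l).eraseIdx ((j.succ : Fin (l.length+1)) : ℕ)
          = v :: l.eraseIdx (j : ℕ) := by
        rw [Fin.val_succ]
        rfl
      rw [hgets, herases, hconsG, Fin.val_succ, pow_succ, ← neg_smul]
      congr 1
      ring
    conv_rhs => rw [Finset.sum_congr rfl (fun j _ => key j)]
    rw [show ∑ j : Fin l.length, - (((-1 : ℂ)^(j:ℕ) * gtwo B Wcre Wann hc u (l.get j)) •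
          fockOp B Wcre Wann hc v (((l.eraseIdx (j:ℕ)).map (fockOp B Wcre Wann hc)).prod x))
        = - ∑ j : Fin l.length, (((-1 : ℂ)^(j:ℕ) * gtwo B Wcre Wann hc u (l.get j)) •
          fockOp B Wcre Wann hc v (((l.eraseIdx (j:ℕ)).map (fockOp B Wcre Wann hc)).prod x))
      from Finset.sum_neg_distrib _]
    rw [hconsG, Fin.val_zero, pow_zero, one_mul, pow_succ, mul_smul]
    have hlast : ((-1 : ℂ) • (fockOp B Wcre Wann hc v
          (((l.map (fockOp B Wcre Wann hc)).prod)
            (CliffordAlgebra.contractLeft (Q := (0 : QuadraticForm ℂ ↥Wcre))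
              (dualOf B Wcre Wann hc u) x))))
        = - (fockOp B Wcre Wann hc v
          (((l.map (fockOp B Wcre Wann hc)).prod)
            (CliffordAlgebra.contractLeft (Q := (0 : QuadraticForm ℂ ↥Wcre))
              (dualOf B Wcre Wann hc u) x))) := by
      rw [neg_one_smul]
    rw [hlast, smul_neg]
    abel

lemma eps_rec (u : W) (l : List W) :
    ExteriorAlgebra.algebraMapInv ((((u :: l).map (fockOp B Wcre Wann hc)).prod) 1)
      = ∑ j : Fin l.length, ((-1 : ℂ)^(j:ℕ) * gtwo B Wcre Wann hc u (l.get j)) *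
          ExteriorAlgebra.algebraMapInv (((l.eraseIdx (j:ℕ)).map (fockOp B Wcre Wann hc)).prod 1) := by
  rw [List.map_cons, List.prod_cons, Module.End.mul_apply, fockOp_apply, map_add, eps_ι_mul,
    zero_add, contr_prod, CliffordAlgebra.contractLeft_one, map_zero, smul_zero, add_zero,
    map_sum]
  refine Finset.sum_congr rfl fun j _ => ?_
  rw [map_smul, smul_eq_mul]

lemma eraseIdx_ofFn {α : Type*} : ∀ (n : ℕ) (f : Fin (n+1) → α) (q : Fin (n+1)),
    (List.ofFn f).eraseIdx (q : ℕ) = List.ofFn (fun t : Fin n => f (q.succAbove t)) := by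
  intro n
  induction n with
  | zero =>
    intro f q
    have : q = 0 := Fin.fin_one_eq_zero q
    subst this
    simp
  | succ n ih =>
    intro f q
    induction q using Fin.cases with
    | zero => simp
    | succ i =>
      rw [List.ofFn_succ, Fin.val_succ]
      rw [show ((f 0 :: List.ofFn fun t : Fin (n+1) => f t.succ) : List α).eraseIdx ((i:ℕ)+1)
          = f 0 :: (List.ofFn fun t : Fin (n+1) => f t.succ).eraseIdx (i:ℕ) from rfl]
      rw [ih _ i, List.ofFn_succ]
      congr 1
      · apply congrArg List.ofFn
        funext t
        rw [Fin.succ_succAbove_succ]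

lemma eps_recFin (N : ℕ) (ψ : Fin (N+2) → W) :
    ExteriorAlgebra.algebraMapInv (((List.ofFn fun i => fockOp B Wcre Wann hc (ψ i)).prod) 1)
      = ∑ q : Fin (N+1), ((-1 : ℂ)^(q:ℕ) * gtwo B Wcre Wann hc (ψ 0) (ψ q.succ)) *
          ExteriorAlgebra.algebraMapInv
            (((List.ofFn fun t : Fin N => fockOp B Wcre Wann hc (ψ (Fin.succ (q.succAbove t)))).prod) 1) := by
  have h1 : (List.ofFn fun i => fockOp B Wcre Wann hc (ψ i))
      = (List.ofFn ψ).map (fockOp B Wcre Wann hc) := by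
    rw [List.map_ofFn]
    rfl
  rw [h1, List.ofFn_succ, eps_rec]
  have hlen : (List.ofFn fun i : Fin (N+1) => ψ i.succ).length = N+1 := List.length_ofFn
  refine Fintype.sum_equiv (finCongr hlen) _ _ ?_
  intro j
  rw [List.get_ofFn]
  rw [show (List.ofFn fun i : Fin (N+1) => ψ i.succ).eraseIdx ((j : ℕ))
      = List.ofFn (fun t : Fin N => ψ ((Fin.cast hlen j).succAbove t).succ) from
    eraseIdx_ofFn N (fun i : Fin (N+1) => ψ i.succ) (Fin.cast hlen j)]
  rw [List.map_ofFn]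
  rfl

lemma pf_zero (A : Matrix (Fin 0) (Fin 0) ℂ) : pf A = 1 := by
  rw [pf, dif_pos Even.zero]
  rw [show (Finset.univ : Finset (Equiv.Perm (Fin 0))) = {1} from Finset.eq_singleton_iff_unique_mem.mpr
    ⟨Finset.mem_univ _, fun π _ => Subsingleton.elim _ _⟩]
  rw [Finset.sum_singleton]
  norm_num [Nat.factorial]

lemma wick_matrix_eq (N : ℕ) (φ : Fin (N+2) → W) (q : Fin (N+1)) :
    (Matrix.of fun i j : Fin N =>
        if i < j then
          ExteriorAlgebra.algebraMapInv
            (fockOp B Wcre Wann hc (φ (Fin.succ (q.succAbove i)))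
              (fockOp B Wcre Wann hc (φ (Fin.succ (q.succAbove j))) 1))
        else if j < i then
          - ExteriorAlgebra.algebraMapInv
            (fockOp B Wcre Wann hc (φ (Fin.succ (q.succAbove j)))
              (fockOp B Wcre Wann hc (φ (Fin.succ (q.succAbove i))) 1))
        else 0)
      = (Matrix.of fun i j : Fin (N+2) =>
          if i < j then
            ExteriorAlgebra.algebraMapInv
              (fockOp B Wcre Wann hc (φ i) (fockOp B Wcre Wann hc (φ j) 1))
          else if j < i then
            - ExteriorAlgebra.algebraMapInv
              (fockOp B Wcre Wann hc (φ j) (fockOp B Wcre Wann hc (φ i) 1))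
          else 0).submatrix (fun t => Fin.succ (q.succAbove t)) (fun t => Fin.succ (q.succAbove t)) := by
  ext i j
  rw [Matrix.submatrix_apply, Matrix.of_apply, Matrix.of_apply]
  have hmono : ∀ a b : Fin N, a < b ↔ Fin.succ (q.succAbove a) < Fin.succ (q.succAbove b) := by
    intro a b
    rw [Fin.succ_lt_succ_iff, Fin.succAbove_lt_succAbove_iff]
  rcases lt_trichotomy i j with h | h | h
  · rw [if_pos h, if_pos ((hmono i j).mp h)]
  · subst h
    rw [if_neg (lt_irrefl _), if_neg (lt_irrefl _), if_neg (lt_irrefl _), if_neg (lt_irrefl _)]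
  · rw [if_neg (not_lt_of_gt h), if_neg (not_lt_of_gt ((hmono j i).mp h)),
      if_pos h, if_pos ((hmono j i).mp h)]

lemma wick_aux : ∀ (n : ℕ) (φ : Fin n → W),
    ExteriorAlgebra.algebraMapInv
        (((List.ofFn fun i => fockOp B Wcre Wann hc (φ i)).prod) 1)
      = pf (Matrix.of fun i j : Fin n =>
          if i < j then
            ExteriorAlgebra.algebraMapInv
              (fockOp B Wcre Wann hc (φ i) (fockOp B Wcre Wann hc (φ j) 1))
          else if j < i then
            - ExteriorAlgebra.algebraMapInv
              (fockOp B Wcre Wann hc (φ j) (fockOp B Wcre Wann hc (φ i) 1))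
          else 0) := by
  intro n
  induction n using Nat.strong_induction_on with
  | _ n ih =>
    intro φ
    match n, ih with
    | 0, _ =>
      rw [List.ofFn_zero, List.prod_nil, Module.End.one_apply, map_one, pf_zero]
    | 1, _ =>
      rw [show (List.ofFn fun i : Fin 1 => fockOp B Wcre Wann hc (φ i))
          = [fockOp B Wcre Wann hc (φ 0)] from rfl, List.prod_singleton,
        fockOp_apply, mul_one, CliffordAlgebra.contractLeft_one, add_zero, eps_ι,
        pf, dif_neg (by decide : ¬ Even 1)]
    | (N+2), ih =>
      rw [eps_recFin B Wcre Wann hc N φ]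
      set A : Matrix (Fin (N+2)) (Fin (N+2)) ℂ := Matrix.of fun i j : Fin (N+2) =>
          if i < j then
            ExteriorAlgebra.algebraMapInv
              (fockOp B Wcre Wann hc (φ i) (fockOp B Wcre Wann hc (φ j) 1))
          else if j < i then
            - ExteriorAlgebra.algebraMapInv
              (fockOp B Wcre Wann hc (φ j) (fockOp B Wcre Wann hc (φ i) 1))
          else 0 with hAdef
      have hA : ∀ i j, A j i = - A i j := by
        intro i j
        rw [hAdef]
        rcases lt_trichotomy i j with h | h | h
        · rw [Matrix.of_apply, Matrix.of_apply, if_neg (not_lt_of_gt h), if_pos h, if_pos h]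
        · subst h
          rw [Matrix.of_apply, if_neg (lt_irrefl _), if_neg (lt_irrefl _), neg_zero]
        · rw [Matrix.of_apply, Matrix.of_apply, if_pos h, if_neg (not_lt_of_gt h), if_pos h,
            neg_neg]
      rw [pf_expand N A hA]
      refine Finset.sum_congr rfl fun q _ => ?_
      have hcoef : A 0 q.succ = gtwo B Wcre Wann hc (φ 0) (φ q.succ) := by
        rw [hAdef, Matrix.of_apply, if_pos (Fin.succ_pos q), twopoint]
      have hmin : ExteriorAlgebra.algebraMapInv
          (((List.ofFn fun t : Fin N =>
            fockOp B Wcre Wann hc (φ (Fin.succ (q.succAbove t)))).prod) 1)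
          = pf (A.submatrix (fun t => Fin.succ (q.succAbove t)) (fun t => Fin.succ (q.succAbove t))) := by
        rw [ih N (by omega) (fun t => φ (Fin.succ (q.succAbove t))), hAdef,
          wick_matrix_eq B Wcre Wann hc N φ q]
      rw [hmin, hcoef]


end OpSide

variable {W : Type*} [AddCommGroup W] [Module ℂ W]

/-- Fermionic Wick formula: the vacuum expectation value of a product `φ₁⋯φ_n` of Clifford
generators in the Fock representation equals the Pfaffian of the antisymmetric matrix of
two-point vacuum expectation values. -/
theorem fermionic_wick_formula
    [FiniteDimensional ℂ W]
    (B : W →ₗ[ℂ] W →ₗ[ℂ] ℂ)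
    (hsymm : ∀ u v : W, B u v = B v u)
    (hnondeg : ∀ u : W, (∀ v : W, B u v = 0) → u = 0)
    (Wcre Wann : Submodule ℂ W) (hc : IsCompl Wcre Wann)
    (hcre : ∀ u ∈ Wcre, ∀ v ∈ Wcre, B u v = 0)
    (hann : ∀ u ∈ Wann, ∀ v ∈ Wann, B u v = 0)
    (n : ℕ) (φ : Fin n → W) :
    ExteriorAlgebra.algebraMapInv
        (((List.ofFn fun i => fockOp B Wcre Wann hc (φ i)).prod) 1)
      = pf (Matrix.of fun i j : Fin n =>
          if i < j then
            ExteriorAlgebra.algebraMapInv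
              (fockOp B Wcre Wann hc (φ i) (fockOp B Wcre Wann hc (φ j) 1))
          else if j < i then
            - ExteriorAlgebra.algebraMapInv
              (fockOp B Wcre Wann hc (φ j) (fockOp B Wcre Wann hc (φ i) 1))
          else 0) := by
  exact wick_aux B Wcre Wann hc n φ

end
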